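/- Let γ = (sin φ : cos φ) be a developing map with lifted monodromy h̃. If τ(h̃) > 0 then φ: ℝ → ℝ is surjective (hence a diffeomorphism onto ℝ). If τ(h̃) = 0 and the monodromy h ∈ PSL(2,ℝ) is hyperbolic, the image of φ is an open interval between two consecutive fixed points of the action of h̃ on ℝ; if h is parabolic, the image is an open interval between consecutive fixed points, of length π (the complement of the unique fixed point of h in RP(1)). -/

import Mathlib

open Real Filter Topology

/-- `h : ℝ → ℝ` is the lift to `ℝ = RP~(1)` of the projective action of a matrix
`M ∈ SL(2,ℝ)` on `RP(1) = ℝ/πℤ`. -/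
def IsMoebiusLift (h : ℝ → ℝ) (M : Matrix (Fin 2) (Fin 2) ℝ) : Prop :=
  StrictMono h ∧ Continuous h ∧ Function.Surjective h ∧
  (∀ x, h (x + π) = h x + π) ∧ M.det = 1 ∧
  ∀ x, ∃ c : ℝ, c ≠ 0 ∧
    Real.sin (h x) = c * (M 0 0 * Real.sin x + M 0 1 * Real.cos x) ∧
    Real.cos (h x) = c * (M 1 0 * Real.sin x + M 1 1 * Real.cos x)



section aux
variable {h : ℝ → ℝ} {M : Matrix (Fin 2) (Fin 2) ℝ}

lemma lift_int (hπ : ∀ x, h (x + π) = h x + π) (k : ℤ) (x : ℝ) :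
    h (x + k * π) = h x + k * π := by
  induction k using Int.induction_on with
  | zero => simp
  | succ n ih =>
      have := hπ (x + n * π)
      push_cast
      push_cast at ih
      rw [show x + (n + 1) * π = x + n*π + π by ring, hπ, ih]; ring
  | pred n ih =>
      push_cast at ih ⊢
      have key := hπ (x + (-(n:ℝ) - 1) * π)
      rw [show x + (-(n:ℝ)-1)*π + π = x + -(n:ℝ)*π by ring] at key
      linarith

lemma iter_lift_int (hπ : ∀ x, h (x + π) = h x + π) (N : ℕ) (k : ℤ) (x : ℝ) :
    h^[N] (x + k * π) = h^[N] x + k * π := by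
  induction N generalizing x with
  | zero => simp
  | succ n ih =>
      rw [Function.iterate_succ_apply, Function.iterate_succ_apply, lift_int hπ, ih]

/-- translation number is independent of the base point -/
lemma trans_indep (hm : StrictMono h) (hπ : ∀ x, h (x + π) = h x + π) {x t : ℝ}
    (ht : Tendsto (fun N : ℕ => h^[N] x / (π * N)) atTop (𝓝 t)) (y : ℝ) :
    Tendsto (fun N : ℕ => h^[N] y / (π * N)) atTop (𝓝 t) := by
  obtain ⟨n, hn⟩ := exists_nat_gt (|x - y| / π)
  have hπ0 := Real.pi_pos
  have hxy : |x - y| ≤ n * π := by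
    rw [div_lt_iff₀ hπ0] at hn; linarith
  have h1 : ∀ N : ℕ, h^[N] x - n * π ≤ h^[N] y ∧ h^[N] y ≤ h^[N] x + n * π := by
    intro N
    have habs := abs_le.mp hxy
    have hy1 : y ≤ x + ((n:ℤ):ℝ) * π := by push_cast; linarith
    have hy2 : x + ((-(n:ℤ)):ℝ) * π ≤ y := by push_cast; linarith
    have m := hm.monotone.iterate N
    have a1 := m hy1
    have a2 := m hy2
    have e1 := iter_lift_int hπ N (n:ℤ) x
    have e2 := iter_lift_int hπ N (-(n:ℤ)) x
    push_cast at a1 a2 e1 e2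
    rw [e1] at a1
    rw [e2] at a2
    constructor <;> linarith
  have hlo : Tendsto (fun N : ℕ => h^[N] x / (π * N) - n / N) atTop (𝓝 t) := by
    simpa using ht.sub (tendsto_const_div_atTop_nhds_zero_nat (n:ℝ))
  have hhi : Tendsto (fun N : ℕ => h^[N] x / (π * N) + n / N) atTop (𝓝 t) := by
    simpa using ht.add (tendsto_const_div_atTop_nhds_zero_nat (n:ℝ))
  refine tendsto_of_tendsto_of_tendsto_of_le_of_le' hlo hhi ?_ ?_
  · filter_upwards [eventually_gt_atTop 0] with N hN
    have hN' : (0:ℝ) < N := by exact_mod_cast hN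
    have h2 := (h1 N).1
    have e : h^[N] x / (π * N) - n / N = (h^[N] x - n * π) / (π * N) := by
      field_simp
    rw [e]
    gcongr
  · filter_upwards [eventually_gt_atTop 0] with N hN
    have hN' : (0:ℝ) < N := by exact_mod_cast hN
    have h2 := (h1 N).2
    have e : h^[N] x / (π * N) + n / N = (h^[N] x + n * π) / (π * N) := by
      field_simp
    rw [e]
    gcongr


section aux2
variable {h : ℝ → ℝ} {M : Matrix (Fin 2) (Fin 2) ℝ}

lemma sin_fixed (hM : ∀ x, ∃ c : ℝ, c ≠ 0 ∧
    Real.sin (h x) = c * (M 0 0 * Real.sin x + M 0 1 * Real.cos x) ∧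
    Real.cos (h x) = c * (M 1 0 * Real.sin x + M 1 1 * Real.cos x)) (x : ℝ) :
    ∃ c : ℝ, c ≠ 0 ∧ Real.sin (h x - x) =
      c * (M 0 1 * cos x ^ 2 + (M 0 0 - M 1 1) * sin x * cos x - M 1 0 * sin x ^ 2) := by
  obtain ⟨c, hc, hs, hco⟩ := hM x
  exact ⟨c, hc, by rw [Real.sin_sub, hs, hco]; ring⟩

lemma exists_Q_zero (hdet : M.det = 1) (htr : 2 ≤ |Matrix.trace M|) :
    ∃ x : ℝ, M 0 1 * cos x ^ 2 + (M 0 0 - M 1 1) * sin x * cos x - M 1 0 * sin x ^ 2 = 0 := by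
  set A := M 0 0; set B := M 0 1; set C := M 1 0; set D := M 1 1
  have hdet' : A * D - B * C = 1 := by
    rw [Matrix.det_fin_two] at hdet; exact hdet
  have htr' : 2 ≤ |A + D| := by rwa [Matrix.trace_fin_two] at htr
  have hdisc : 0 ≤ (A - D)^2 + 4 * B * C := by
    nlinarith [sq_abs (A + D), sq_nonneg (|A+D| - 2), abs_nonneg (A+D)]
  by_cases hC : C = 0
  · refine ⟨π/2, by simp [hC]⟩
  · set s := Real.sqrt ((A - D)^2 + 4 * B * C) with hs
    have hs2 : s^2 = (A - D)^2 + 4 * B * C := Real.sq_sqrt hdisc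
    set t₀ := ((A - D) + s) / (2 * C) with ht₀
    have key : B + (A - D) * t₀ - C * t₀ ^ 2 = 0 := by
      rw [ht₀]; field_simp; nlinarith [hs2]
    refine ⟨Real.arctan t₀, ?_⟩
    have hcos : Real.cos (Real.arctan t₀) ≠ 0 := (Real.cos_arctan_pos t₀).ne'
    have hsin : Real.sin (Real.arctan t₀) = t₀ * Real.cos (Real.arctan t₀) := by
      have e := Real.tan_arctan t₀
      rw [Real.tan_eq_sin_div_cos, div_eq_iff hcos] at e
      linarith
    rw [hsin]; nlinarith [key, sq_nonneg (Real.cos (Real.arctan t₀))]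

lemma exists_fixed_mod (hM : ∀ x, ∃ c : ℝ, c ≠ 0 ∧
    Real.sin (h x) = c * (M 0 0 * Real.sin x + M 0 1 * Real.cos x) ∧
    Real.cos (h x) = c * (M 1 0 * Real.sin x + M 1 1 * Real.cos x))
    (hdet : M.det = 1) (htr : 2 ≤ |Matrix.trace M|) :
    ∃ (x : ℝ) (k : ℤ), h x = x + k * π := by
  obtain ⟨x, hx⟩ := exists_Q_zero hdet htr
  obtain ⟨c, hc, hsin⟩ := sin_fixed hM x
  rw [hx, mul_zero] at hsin
  obtain ⟨k, hk⟩ := Real.sin_eq_zero_iff.mp hsin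
  exact ⟨x, k, by linarith⟩

end aux2


section aux3
variable {h : ℝ → ℝ} {M : Matrix (Fin 2) (Fin 2) ℝ}

lemma eig_eqs (hM : ∀ x, ∃ c : ℝ, c ≠ 0 ∧
    Real.sin (h x) = c * (M 0 0 * Real.sin x + M 0 1 * Real.cos x) ∧
    Real.cos (h x) = c * (M 1 0 * Real.sin x + M 1 1 * Real.cos x))
    (hdet : M.det = 1) {c : ℝ} (hfix : h c = c) :
    ∃ lam : ℝ, (M 0 0 - lam) * Real.sin c + M 0 1 * Real.cos c = 0 ∧
      M 1 0 * Real.sin c + (M 1 1 - lam) * Real.cos c = 0 ∧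
      lam ^ 2 - Matrix.trace M * lam + 1 = 0 := by
  obtain ⟨c', hc', hs, hco⟩ := hM c
  rw [hfix] at hs hco
  refine ⟨1 / c', ?_, ?_, ?_⟩
  · field_simp; linarith [hs]
  · field_simp; linarith [hco]
  · set lam := 1 / c' with hlam
    have e1 : (M 0 0 - lam) * Real.sin c + M 0 1 * Real.cos c = 0 := by
      rw [hlam]; field_simp; linarith [hs]
    have e2 : M 1 0 * Real.sin c + (M 1 1 - lam) * Real.cos c = 0 := by
      rw [hlam]; field_simp; linarith [hco]
    have hpy := Real.sin_sq_add_cos_sq c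
    have hdet' : M 0 0 * M 1 1 - M 0 1 * M 1 0 = 1 := by
      rw [Matrix.det_fin_two] at hdet; exact hdet
    rw [Matrix.trace_fin_two]
    set A := M 0 0; set B := M 0 1; set C := M 1 0; set D := M 1 1
    have h1 : ((A - lam) * (D - lam) - B * C) * Real.sin c = 0 := by
      linear_combination (D - lam) * e1 - B * e2
    have h2 : ((A - lam) * (D - lam) - B * C) * Real.cos c = 0 := by
      linear_combination (A - lam) * e2 - C * e1
    have key : (A - lam) * (D - lam) - B * C = 0 := by
      linear_combination Real.sin c * h1 + Real.cos c * h2 -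
        ((A - lam) * (D - lam) - B * C) * hpy
    linear_combination key - hdet'

lemma parab_unique (hM : ∀ x, ∃ c : ℝ, c ≠ 0 ∧
    Real.sin (h x) = c * (M 0 0 * Real.sin x + M 0 1 * Real.cos x) ∧
    Real.cos (h x) = c * (M 1 0 * Real.sin x + M 1 1 * Real.cos x))
    (hdet : M.det = 1) (htr : |Matrix.trace M| = 2)
    {c₁ c₂ : ℝ} (h1 : h c₁ = c₁) (h2 : h c₂ = c₂)
    (hlt : c₁ < c₂) (hlt2 : c₂ < c₁ + π) : M = 1 ∨ M = -1 := by
  obtain ⟨l₁, e11, e12, e13⟩ := eig_eqs hM hdet h1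
  obtain ⟨l₂, e21, e22, e23⟩ := eig_eqs hM hdet h2
  have hW : Real.sin c₂ * Real.cos c₁ - Real.cos c₂ * Real.sin c₁ ≠ 0 := by
    rw [← Real.sin_sub]
    exact (Real.sin_pos_of_pos_of_lt_pi (by linarith) (by linarith)).ne'
  rcases abs_eq (by norm_num : (0:ℝ) ≤ 2) |>.mp htr with htr2 | htr2
  · left
    have hl1 : l₁ = 1 := by
      have : (l₁ - 1)^2 = 0 := by rw [htr2] at e13; nlinarith [e13]
      have := pow_eq_zero_iff (n := 2) (by norm_num) |>.mp this
      linarith [sub_eq_zero.mp this]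
    have hl2 : l₂ = 1 := by
      have : (l₂ - 1)^2 = 0 := by rw [htr2] at e23; nlinarith [e23]
      have := pow_eq_zero_iff (n := 2) (by norm_num) |>.mp this
      linarith [sub_eq_zero.mp this]
    rw [hl1] at e11 e12; rw [hl2] at e21 e22
    have hA : M 0 0 - 1 = 0 := by
      have hz : (M 0 0 - 1) * (Real.sin c₂ * Real.cos c₁ - Real.cos c₂ * Real.sin c₁) = 0 := by
        linear_combination Real.cos c₁ * e21 - Real.cos c₂ * e11
      exact (mul_eq_zero.mp hz).resolve_right hW
    have hB : M 0 1 = 0 := by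
      have hz : (M 0 1) * (Real.sin c₂ * Real.cos c₁ - Real.cos c₂ * Real.sin c₁) = 0 := by
        linear_combination Real.sin c₂ * e11 - Real.sin c₁ * e21
      exact (mul_eq_zero.mp hz).resolve_right hW
    have hD : M 1 1 - 1 = 0 := by
      have hz : (M 1 1 - 1) * (Real.sin c₂ * Real.cos c₁ - Real.cos c₂ * Real.sin c₁) = 0 := by
        linear_combination Real.sin c₂ * e12 - Real.sin c₁ * e22
      exact (mul_eq_zero.mp hz).resolve_right hW
    have hC : M 1 0 = 0 := by
      have hz : (M 1 0) * (Real.sin c₂ * Real.cos c₁ - Real.cos c₂ * Real.sin c₁) = 0 := by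
        linear_combination Real.cos c₁ * e22 - Real.cos c₂ * e12
      exact (mul_eq_zero.mp hz).resolve_right hW
    have hA' : M 0 0 = 1 := by linarith
    have hD' : M 1 1 = 1 := by linarith
    ext i j
    fin_cases i <;> fin_cases j <;>
      simp [Matrix.one_apply, hA', hB, hC, hD']
  · right
    have hl1 : l₁ = -1 := by
      have h0 : (l₁ + 1)^2 = 0 := by rw [htr2] at e13; nlinarith [e13]
      have := pow_eq_zero_iff (n := 2) (by norm_num) |>.mp h0
      linarith
    have hl2 : l₂ = -1 := by
      have h0 : (l₂ + 1)^2 = 0 := by rw [htr2] at e23; nlinarith [e23]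
      have := pow_eq_zero_iff (n := 2) (by norm_num) |>.mp h0
      linarith
    rw [hl1] at e11 e12; rw [hl2] at e21 e22
    have hA : M 0 0 + 1 = 0 := by
      have hz : (M 0 0 + 1) * (Real.sin c₂ * Real.cos c₁ - Real.cos c₂ * Real.sin c₁) = 0 := by
        linear_combination Real.cos c₁ * e21 - Real.cos c₂ * e11
      exact (mul_eq_zero.mp hz).resolve_right hW
    have hB : M 0 1 = 0 := by
      have hz : (M 0 1) * (Real.sin c₂ * Real.cos c₁ - Real.cos c₂ * Real.sin c₁) = 0 := by
        linear_combination Real.sin c₂ * e11 - Real.sin c₁ * e21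
      exact (mul_eq_zero.mp hz).resolve_right hW
    have hD : M 1 1 + 1 = 0 := by
      have hz : (M 1 1 + 1) * (Real.sin c₂ * Real.cos c₁ - Real.cos c₂ * Real.sin c₁) = 0 := by
        linear_combination Real.sin c₂ * e12 - Real.sin c₁ * e22
      exact (mul_eq_zero.mp hz).resolve_right hW
    have hC : M 1 0 = 0 := by
      have hz : (M 1 0) * (Real.sin c₂ * Real.cos c₁ - Real.cos c₂ * Real.sin c₁) = 0 := by
        linear_combination Real.cos c₁ * e22 - Real.cos c₂ * e12
      exact (mul_eq_zero.mp hz).resolve_right hW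
    have hA' : M 0 0 = -1 := by linarith
    have hD' : M 1 1 = -1 := by linarith
    ext i j
    fin_cases i <;> fin_cases j <;>
      simp [Matrix.one_apply, Matrix.neg_apply, hA', hB, hC, hD']


section aux4
variable {φ h : ℝ → ℝ}

lemma range_between (hφc : Continuous φ) (hφm : StrictMono φ)
    (hhm : StrictMono h) (hhc : Continuous h)
    (hper : ∀ x, φ (x + 1) = h (φ x))
    {a b : ℝ} (ha : h a = a) (hb : h b = b)
    (hab : a < φ 0) (hab2 : φ 0 < b)
    (hnof : ∀ c, a < c → c < b → h c ≠ c) :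
    Set.range φ = Set.Ioo a b := by
  have hφ01 : φ 0 < h (φ 0) := by
    rw [← hper 0, show (0:ℝ) + 1 = 1 by ring]
    exact hφm (by norm_num)
  -- h x > x on (a,b)
  have hpos : ∀ x, a < x → x < b → x < h x := by
    intro x hax hxb
    by_contra hle
    push_neg at hle
    have hne := hnof x hax hxb
    have hlt : h x < x := lt_of_le_of_ne hle hne
    have hgc : Continuous (fun y => h y - y) := hhc.sub continuous_id
    have h0mem : (0:ℝ) ∈ Set.uIcc (h x - x) (h (φ 0) - φ 0) := by
      rw [Set.mem_uIcc]; left; constructor <;> linarith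
    obtain ⟨z, hz, hz0⟩ := intermediate_value_uIcc (a := x) (b := φ 0) hgc.continuousOn h0mem
    rw [Set.mem_uIcc] at hz
    have hza : a < z := by rcases hz with ⟨h1, h2⟩ | ⟨h1, h2⟩ <;> linarith
    have hzb : z < b := by rcases hz with ⟨h1, h2⟩ | ⟨h1, h2⟩ <;> linarith
    exact hnof z hza hzb (by dsimp at hz0; linarith)
  -- membership of the forward orbit
  have hion : ∀ N : ℕ, φ (N : ℝ) ∈ Set.Ioo a b := by
    intro N
    induction N with
    | zero => exact ⟨by simpa using hab, by simpa using hab2⟩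
    | succ n ih =>
        have e : φ ((n:ℝ) + 1) = h (φ (n:ℝ)) := hper _
        have h1 : a < h (φ (n:ℝ)) := by rw [← ha]; exact hhm ih.1
        have h2 : h (φ (n:ℝ)) < b := by rw [← hb]; exact hhm ih.2
        push_cast
        rw [e]; exact ⟨h1, h2⟩
  have hneg : ∀ N : ℕ, φ (-(N : ℝ)) ∈ Set.Ioo a b := by
    intro N
    induction N with
    | zero => exact ⟨by simpa using hab, by simpa using hab2⟩
    | succ n ih =>
        have e : φ (-((n:ℝ)+1) + 1) = h (φ (-((n:ℝ)+1))) := hper _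
        rw [show -((n:ℝ)+1) + 1 = -(n:ℝ) by ring] at e
        have h1 : h a < h (φ (-((n:ℝ)+1))) := by rw [ha, ← e]; exact ih.1
        have h2 : h (φ (-((n:ℝ)+1))) < h b := by rw [hb, ← e]; exact ih.2
        push_cast
        exact ⟨hhm.lt_iff_lt.mp h1, hhm.lt_iff_lt.mp h2⟩
  -- forward limit is b
  have humono : Monotone (fun N : ℕ => φ (N : ℝ)) := fun m n hmn =>
    hφm.monotone (by exact_mod_cast hmn)
  have hubdd : BddAbove (Set.range fun N : ℕ => φ (N : ℝ)) :=
    ⟨b, by rintro y ⟨N, rfl⟩; exact (hion N).2.le⟩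
  set L := ⨆ N : ℕ, φ (N : ℝ) with hL
  have hulim : Tendsto (fun N : ℕ => φ (N : ℝ)) atTop (𝓝 L) :=
    tendsto_atTop_ciSup humono hubdd
  have hLb : L ≤ b := ciSup_le fun N => (hion N).2.le
  have haL : a < L := lt_of_lt_of_le (by simpa using hab) (le_ciSup hubdd 0)
  have hfixL : h L = L := by
    have h1 : Tendsto (fun N : ℕ => φ ((N:ℝ) + 1)) atTop (𝓝 (h L)) := by
      have : Tendsto (fun N : ℕ => h (φ (N : ℝ))) atTop (𝓝 (h L)) :=
        (hhc.continuousAt.tendsto).comp hulim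
      exact this.congr fun N => (hper _).symm
    have h2 : Tendsto (fun N : ℕ => φ ((N:ℝ) + 1)) atTop (𝓝 L) := by
      have := hulim.comp (tendsto_add_atTop_nat 1)
      refine this.congr fun N => ?_
      norm_cast
    exact tendsto_nhds_unique h1 h2
  have hLeqb : L = b := by
    by_contra hne
    exact hnof L haL (lt_of_le_of_ne hLb hne) hfixL
  -- backward limit is a
  have hvanti : Antitone (fun N : ℕ => φ (-(N : ℝ))) := fun m n hmn =>
    hφm.monotone (neg_le_neg (by exact_mod_cast hmn))
  have hvbdd : BddBelow (Set.range fun N : ℕ => φ (-(N : ℝ))) :=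
    ⟨a, by rintro y ⟨N, rfl⟩; exact (hneg N).1.le⟩
  set L' := ⨅ N : ℕ, φ (-(N : ℝ)) with hL'
  have hvlim : Tendsto (fun N : ℕ => φ (-(N : ℝ))) atTop (𝓝 L') :=
    tendsto_atTop_ciInf hvanti hvbdd
  have hL'a : a ≤ L' := le_ciInf fun N => (hneg N).1.le
  have hL'b : L' < b := lt_of_le_of_lt (ciInf_le hvbdd 0) (by simpa using hab2)
  have hfixL' : h L' = L' := by
    have h1 : Tendsto (fun N : ℕ => h (φ (-((N:ℝ) + 1)))) atTop (𝓝 (h L')) := by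
      have h0 : Tendsto (fun N : ℕ => φ (-((N:ℝ) + 1))) atTop (𝓝 L') := by
        have := hvlim.comp (tendsto_add_atTop_nat 1)
        refine this.congr fun N => ?_
        norm_cast
      exact (hhc.continuousAt.tendsto).comp h0
    have h2 : Tendsto (fun N : ℕ => h (φ (-((N:ℝ) + 1)))) atTop (𝓝 L') := by
      refine hvlim.congr fun N => ?_
      rw [← hper (-((N:ℝ)+1)), show -((N:ℝ)+1) + 1 = -(N:ℝ) by ring]
    exact tendsto_nhds_unique h1 h2
  have hL'eqa : L' = a := by
    by_contra hne
    exact hnof L' (lt_of_le_of_ne hL'a (Ne.symm hne)) hL'b hfixL'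
  -- conclude
  apply Set.eq_of_subset_of_subset
  · rintro y ⟨x, rfl⟩
    obtain ⟨N, hN⟩ := exists_nat_ge |x|
    have hN1 : x ≤ (N:ℝ) := le_trans (le_abs_self x) hN
    have hN2 : -(N:ℝ) ≤ x := by
      have := neg_abs_le x; linarith
    constructor
    · exact lt_of_lt_of_le (hneg N).1 (hφm.monotone hN2)
    · exact lt_of_le_of_lt (hφm.monotone hN1) (hion N).2
  · rintro y ⟨hy1, hy2⟩
    have h1 : ∀ᶠ N : ℕ in atTop, φ (-(N:ℝ)) < y := by
      apply hvlim.eventually_lt_const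
      rw [hL'eqa]; exact hy1
    have h2 : ∀ᶠ N : ℕ in atTop, y < φ (N:ℝ) := by
      apply hulim.eventually_const_lt
      rw [hLeqb]; exact hy2
    obtain ⟨N, hN1, hN2⟩ := (h1.and h2).exists
    have hsub := intermediate_value_Icc (by linarith [abs_nonneg (N:ℝ)] :
      -(N:ℝ) ≤ (N:ℝ)) hφc.continuousOn
    obtain ⟨x, _, hx⟩ := hsub ⟨hN1.le, hN2.le⟩
    exact ⟨x, hx⟩

lemma surjective_of_pos (hφc : Continuous φ) (hφm : StrictMono φ)
    (hhm : StrictMono h)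
    (hper : ∀ x, φ (x + 1) = h (φ x))
    (hdiv : ∀ y : ℝ, Tendsto (fun N : ℕ => h^[N] y) atTop atTop) :
    Function.Surjective φ := by
  have hiter : ∀ N : ℕ, h^[N] (φ (-(N:ℝ))) = φ 0 := by
    intro N
    induction N with
    | zero => simp
    | succ n ih =>
        have e : φ (-((n:ℝ)+1) + 1) = h (φ (-((n:ℝ)+1))) := hper _
        rw [show -((n:ℝ)+1) + 1 = -(n:ℝ) by ring] at e
        rw [Function.iterate_succ_apply,
          show (-((n+1:ℕ):ℝ)) = -((n:ℝ)+1) by push_cast; ring, ← e, ih]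
  have hfwd : ∀ N : ℕ, φ (N:ℝ) = h^[N] (φ 0) := by
    intro N
    induction N with
    | zero => simp
    | succ n ih =>
        rw [Function.iterate_succ_apply', ← ih, ← hper (n:ℝ)]
        congr 1
        push_cast; ring
  intro y
  -- find N with φ N ≥ y
  obtain ⟨N₁, hN₁⟩ := ((hdiv (φ 0)).eventually_ge_atTop y).exists
  rw [← hfwd N₁] at hN₁
  -- find N with φ (-N) ≤ y
  have hlow : ∃ N : ℕ, φ (-(N:ℝ)) ≤ y := by
    by_contra hc
    push_neg at hc
    have hb : ∀ N : ℕ, h^[N] y ≤ φ 0 := by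
      intro N
      calc h^[N] y ≤ h^[N] (φ (-(N:ℝ))) :=
            (hhm.monotone.iterate N) (hc N).le
        _ = φ 0 := hiter N
    obtain ⟨N, hN⟩ := ((hdiv y).eventually_gt_atTop (φ 0)).exists
    exact absurd (hb N) (not_le.mpr hN)
  obtain ⟨N₂, hN₂⟩ := hlow
  set N := max N₁ N₂ with hN
  have hle1 : y ≤ φ (N:ℝ) := le_trans hN₁ (hφm.monotone (by exact_mod_cast le_max_left N₁ N₂))
  have hle2 : φ (-(N:ℝ)) ≤ y := le_trans (hφm.monotone (by
    have : (N₂:ℝ) ≤ N := by exact_mod_cast le_max_right N₁ N₂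
    linarith)) hN₂
  have hsub := intermediate_value_Icc (neg_le_self (Nat.cast_nonneg N) :
    -(N:ℝ) ≤ (N:ℝ)) hφc.continuousOn
  obtain ⟨x, _, hx⟩ := hsub ⟨hle2, hle1⟩
  exact ⟨x, hx⟩

end aux4


section aux5
variable {h : ℝ → ℝ}

lemma lift_int' (hπ : ∀ x, h (x + π) = h x + π) (k : ℤ) (x : ℝ) :
    h (x + k * π) = h x + k * π := by
  induction k using Int.induction_on with
  | zero => simp
  | succ n ih =>
      push_cast
      push_cast at ih
      rw [show x + (n + 1) * π = x + n*π + π by ring, hπ, ih]; ring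
  | pred n ih =>
      push_cast at ih ⊢
      have key := hπ (x + (-(n:ℝ) - 1) * π)
      rw [show x + (-(n:ℝ)-1)*π + π = x + -(n:ℝ)*π by ring] at key
      linarith

lemma consecutive_fixed (hhc : Continuous h) (hπ : ∀ x, h (x + π) = h x + π)
    {x₀ : ℝ} (hx₀ : h x₀ = x₀) {p : ℝ} (hp : h p ≠ p) :
    ∃ a b : ℝ, a < p ∧ p < b ∧ h a = a ∧ h b = b ∧ b ≤ a + π ∧
      ∀ c, a < c → c < b → h c ≠ c := by
  have hπ0 := Real.pi_pos
  set S := {x : ℝ | h x = x} ∩ Set.Iic p with hS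
  have hScl : IsClosed S := (isClosed_eq hhc continuous_id).inter isClosed_Iic
  have hfixk : ∀ k : ℤ, h (x₀ + k * π) = x₀ + k * π := by
    intro k; rw [lift_int' hπ, hx₀]
  have hSne : S.Nonempty := by
    refine ⟨x₀ + (⌊(p - x₀)/π⌋ : ℤ) * π, hfixk _, ?_⟩
    have h1 : (⌊(p - x₀)/π⌋ : ℝ) ≤ (p - x₀)/π := Int.floor_le _
    have h2 : (⌊(p - x₀)/π⌋ : ℝ) * π ≤ p - x₀ := by
      rw [← le_div_iff₀ hπ0] at *; exact h1
    simp only [Set.mem_Iic]; linarith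
  have hSbdd : BddAbove S := ⟨p, fun x hx => hx.2⟩
  set a := sSup S with ha'
  have haS : a ∈ S := hScl.csSup_mem hSne hSbdd
  have ha : h a = a := haS.1
  have hap : a < p := lt_of_le_of_ne haS.2 (fun e => hp (e ▸ ha))
  have hfa : h (a + π) = a + π := by rw [hπ, ha]
  have hpap : p ≤ a + π := by
    by_contra hc
    push_neg at hc
    have : a + π ≤ a := le_csSup hSbdd ⟨hfa, hc.le⟩
    linarith
  set T := {x : ℝ | h x = x} ∩ Set.Ici p with hT
  have hTcl : IsClosed T := (isClosed_eq hhc continuous_id).inter isClosed_Ici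
  have hTne : T.Nonempty := ⟨a + π, hfa, hpap⟩
  have hTbdd : BddBelow T := ⟨p, fun x hx => hx.2⟩
  set b := sInf T with hb'
  have hbT : b ∈ T := hTcl.csInf_mem hTne hTbdd
  have hb : h b = b := hbT.1
  have hpb : p < b := lt_of_le_of_ne hbT.2 (fun e => hp (by rw [e]; exact hb))
  have hbap : b ≤ a + π := csInf_le hTbdd ⟨hfa, hpap⟩
  refine ⟨a, b, hap, hpb, ha, hb, hbap, ?_⟩
  intro c hac hcb hfc
  rcases le_or_gt c p with hcp | hcp
  · exact absurd (le_csSup hSbdd ⟨hfc, hcp⟩) (not_le.mpr hac)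
  · exact absurd (csInf_le hTbdd ⟨hfc, hcp.le⟩) (not_le.mpr hcb)

end aux5

/-- Range of a developing map `γ = (sin φ : cos φ)` with lifted monodromy `h̃`:
if `τ(h̃) > 0` then `φ` is surjective; if `τ(h̃) = 0` and the monodromy is hyperbolic
(`|tr M| > 2`), the image of `φ` is the open interval between two consecutive fixed
points of `h̃`; if it is parabolic (`|tr M| = 2`, `M ≠ ±1`), the image is an interval
of length `π` between consecutive fixed points. -/
theorem range_of_developing_map
    (φ h : ℝ → ℝ) (M : Matrix (Fin 2) (Fin 2) ℝ) (t : ℝ)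
    (hφc : Continuous φ) (hφm : StrictMono φ)
    (hM : IsMoebiusLift h M)
    (hper : ∀ x, φ (x + 1) = h (φ x))
    (ht : Tendsto (fun N : ℕ => h^[N] (φ 0) / (π * N)) atTop (𝓝 t)) :
    (0 < t → Function.Surjective φ) ∧
    (t = 0 → 2 < |Matrix.trace M| →
      ∃ a b : ℝ, a < b ∧ h a = a ∧ h b = b ∧ (∀ c, a < c → c < b → h c ≠ c) ∧
        Set.range φ = Set.Ioo a b) ∧
    (t = 0 → |Matrix.trace M| = 2 → M ≠ 1 → M ≠ -1 →
      ∃ a : ℝ, h a = a ∧ (∀ c, a < c → c < a + π → h c ≠ c) ∧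
        Set.range φ = Set.Ioo a (a + π)) := by
  obtain ⟨hhm, hhc, hhsurj, hπ, hdet, heq⟩ := hM
  have hφ01 : φ 0 < h (φ 0) := by
    have := hφm (show (0:ℝ) < 0 + 1 by norm_num)
    rwa [hper 0] at this
  have hpne : h (φ 0) ≠ φ 0 := ne_of_gt hφ01
  have fixed0 : t = 0 → 2 ≤ |Matrix.trace M| → ∃ x, h x = x := by
    intro ht0 htr
    obtain ⟨x, k, hx⟩ := exists_fixed_mod heq hdet htr
    have hit : ∀ N : ℕ, h^[N] x = x + N * ((k:ℝ) * π) := by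
      intro N
      induction N with
      | zero => simp
      | succ n ih =>
          rw [Function.iterate_succ_apply, hx, iter_lift_int hπ, ih]
          push_cast; ring
    have hl1 := trans_indep hhm hπ ht x
    rw [ht0] at hl1
    have hl2 : Tendsto (fun N : ℕ => h^[N] x / (π * N)) atTop (𝓝 (k:ℝ)) := by
      have base : Tendsto (fun N : ℕ => x/π/(N:ℝ) + (k:ℝ)) atTop (𝓝 (0 + (k:ℝ))) :=
        (tendsto_const_div_atTop_nhds_zero_nat (x/π)).add tendsto_const_nhds
      rw [zero_add] at base
      refine Tendsto.congr' ?_ base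
      filter_upwards [eventually_gt_atTop 0] with N hN
      have hN' : (N:ℝ) ≠ 0 := by positivity
      have hπ0 : (π:ℝ) ≠ 0 := Real.pi_ne_zero
      rw [hit N]
      field_simp
    have hk0 : (k:ℝ) = 0 := tendsto_nhds_unique hl2 hl1
    exact ⟨x, by rw [hx, hk0]; ring⟩
  refine ⟨?_, ?_, ?_⟩
  · -- t > 0 : surjective
    intro htpos
    apply surjective_of_pos hφc hφm hhm hper
    intro y
    have hty := trans_indep hhm hπ ht y
    have hev : ∀ᶠ N : ℕ in atTop, t/2 < h^[N] y / (π * N) :=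
      hty.eventually_const_lt (by linarith)
    have hbound : Tendsto (fun N : ℕ => t/2 * (π * N)) atTop atTop := by
      have h1 : Tendsto (fun N : ℕ => (N:ℝ)) atTop atTop := tendsto_natCast_atTop_atTop
      have h2 := h1.const_mul_atTop (show (0:ℝ) < t/2*π by positivity)
      refine h2.congr fun N => by ring
    refine tendsto_atTop_mono' atTop ?_ hbound
    filter_upwards [hev, eventually_gt_atTop 0] with N h1 h2
    have hN0 : (0:ℝ) < N := by exact_mod_cast h2
    have hπN : (0:ℝ) < π * N := by positivity
    exact (le_div_iff₀ hπN).mp h1.le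
  · -- hyperbolic
    intro ht0 htr
    obtain ⟨x₀, hx₀⟩ := fixed0 ht0 htr.le
    obtain ⟨a, b, hap, hpb, ha, hb, hbap, hnof⟩ := consecutive_fixed hhc hπ hx₀ hpne
    exact ⟨a, b, lt_trans hap hpb, ha, hb, hnof,
      range_between hφc hφm hhm hhc hper ha hb hap hpb hnof⟩
  · -- parabolic
    intro ht0 htr hM1 hM2
    obtain ⟨x₀, hx₀⟩ := fixed0 ht0 (le_of_eq htr.symm)
    obtain ⟨a, b, hap, hpb, ha, hb, hbap, hnof⟩ := consecutive_fixed hhc hπ hx₀ hpne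
    have hbeq : b = a + π := by
      rcases lt_or_eq_of_le hbap with hlt | heqb
      · exfalso
        rcases parab_unique heq hdet htr ha hb (lt_trans hap hpb) hlt with h1 | h1
        · exact hM1 h1
        · exact hM2 h1
      · exact heqb
    exact ⟨a, ha, fun c h1 h2 => hnof c h1 (by rw [hbeq]; exact h2),
      by rw [← hbeq]; exact range_between hφc hφm hhm hhc hper ha hb hap hpb hnof⟩
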